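/- Let D̃₁ = μ₁I + B₁⁻¹Δ_{c-1}B₁ and D̃₂ = μ₂I + B₂⁻¹Δ_{c-1}B₂, let φ̃* be a right eigenvector with (B₁ - D̃₁)φ̃* = 0 and ψ̃_c a right eigenvector with (B₂ - D̃₂)ψ̃_c = 0. Then (B₁ D̃₁⁻¹ D̃₂ - B₂) ψ̃_c = 0, i.e., the column vector D̃₁⁻¹ D̃₂ ψ̃_c is a right null vector of B₁ - D̃₁. -/

import Mathlib

open Matrix

/-- if (B₁ - D̃₁)φ̃* = 0 and (B₂ - D̃₂)ψ̃_c = 0, then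
(B₁D̃₁⁻¹D̃₂ - B₂)ψ̃_c = 0, i.e. D̃₁⁻¹D̃₂ψ̃_c is a right null vector of B₁ - D̃₁. -/
theorem stmt_9 (c : ℕ) (hc : 2 ≤ c) (mu1 mu2 : ℝ) (hmu1 : 0 < mu1) (hmu2 : 0 < mu2)
    (B1 B2 Δ : Matrix (Fin c) (Fin c) ℝ)
    (hB1 : B1 = Matrix.of fun (i j : Fin c) =>
      if (j : ℕ) = (i : ℕ) then ((i : ℕ) + 1 : ℝ) * mu1
      else if (j : ℕ) = (i : ℕ) + 1 then ((c - (i : ℕ) - 1 : ℕ) : ℝ) * mu2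
      else 0)
    (hB2 : B2 = Matrix.of fun (i j : Fin c) =>
      if (j : ℕ) = (i : ℕ) then ((c - (i : ℕ) : ℕ) : ℝ) * mu2
      else if (j : ℕ) + 1 = (i : ℕ) then ((i : ℕ) : ℝ) * mu1
      else 0)
    (hΔ : Δ = Matrix.diagonal fun j : Fin c =>
      ((j : ℕ) : ℝ) * mu1 + ((c - 1 - (j : ℕ) : ℕ) : ℝ) * mu2)
    (D1 D2 : Matrix (Fin c) (Fin c) ℝ)
    (hD1 : D1 = mu1 • (1 : Matrix (Fin c) (Fin c) ℝ) + B1⁻¹ * Δ * B1)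
    (hD2 : D2 = mu2 • (1 : Matrix (Fin c) (Fin c) ℝ) + B2⁻¹ * Δ * B2)
    (φ ψ : Fin c → ℝ)
    (hφ : (B1 - D1) *ᵥ φ = 0) (hψ : (B2 - D2) *ᵥ ψ = 0) :
    (B1 * D1⁻¹ * D2 - B2) *ᵥ ψ = 0 ∧
      (B1 - D1) *ᵥ ((D1⁻¹ * D2) *ᵥ ψ) = 0 := by
  -- diagonal matrices E1 = μ₁I + Δ, E2 = μ₂I + Δ
  set e1 : Fin c → ℝ := fun j =>
    mu1 + (((j : ℕ) : ℝ) * mu1 + ((c - 1 - (j : ℕ) : ℕ) : ℝ) * mu2) with he1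
  set e2 : Fin c → ℝ := fun j =>
    mu2 + (((j : ℕ) : ℝ) * mu1 + ((c - 1 - (j : ℕ) : ℕ) : ℝ) * mu2) with he2
  set E1 : Matrix (Fin c) (Fin c) ℝ := Matrix.diagonal e1 with hE1d
  set E2 : Matrix (Fin c) (Fin c) ℝ := Matrix.diagonal e2 with hE2d
  have hE1 : mu1 • (1 : Matrix (Fin c) (Fin c) ℝ) + Δ = E1 := by
    ext i j
    by_cases hij : i = j <;>
      simp [hΔ, hE1d, he1, Matrix.diagonal_apply, Matrix.one_apply, hij]
  have hE2 : mu2 • (1 : Matrix (Fin c) (Fin c) ℝ) + Δ = E2 := by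
    ext i j
    by_cases hij : i = j <;>
      simp [hΔ, hE2d, he2, Matrix.diagonal_apply, Matrix.one_apply, hij]
  -- invertibility of B1, B2, E1
  have hB1u : IsUnit B1.det := by
    have htri : B1.BlockTriangular id := by
      intro i j hij
      simp only [id] at hij
      have h1 : ¬((j:ℕ) = (i:ℕ)) := by omega
      have h2 : ¬((j:ℕ) = (i:ℕ)+1) := by omega
      simp [hB1, h1, h2]
    rw [Matrix.det_of_upperTriangular htri, isUnit_iff_ne_zero]
    apply Finset.prod_ne_zero_iff.2
    intro i _
    simp only [hB1, Matrix.of_apply, if_pos rfl]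
    exact mul_ne_zero (by positivity) (ne_of_gt hmu1)
  have hB2u : IsUnit B2.det := by
    have htri : B2.BlockTriangular (fun i => OrderDual.toDual i) := by
      intro i j hij
      have hij' : (i : ℕ) < (j : ℕ) := hij
      have h1 : ¬((j:ℕ) = (i:ℕ)) := by omega
      have h2 : ¬((j:ℕ) + 1 = (i:ℕ)) := by omega
      simp [hB2, h1, h2]
    rw [Matrix.det_of_lowerTriangular B2 htri, isUnit_iff_ne_zero]
    apply Finset.prod_ne_zero_iff.2
    intro i _
    simp only [hB2, Matrix.of_apply, if_pos rfl]
    have : 0 < c - (i : ℕ) := by omega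
    exact mul_ne_zero (by positivity) (ne_of_gt hmu2)
  have hE1u : IsUnit E1.det := by
    rw [hE1d, Matrix.det_diagonal, isUnit_iff_ne_zero]
    apply Finset.prod_ne_zero_iff.2
    intro i _
    have : (0:ℝ) < e1 i := by
      rw [he1]
      have h1 : (0:ℝ) ≤ ((i : ℕ) : ℝ) * mu1 := by positivity
      have h2 : (0:ℝ) ≤ ((c - 1 - (i : ℕ) : ℕ) : ℝ) * mu2 := by positivity
      dsimp only
      linarith
    exact ne_of_gt this
  -- B1 * D1 = E1 * B1 and B2 * D2 = E2 * B2
  have hBD1 : B1 * D1 = E1 * B1 := by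
    rw [hD1, Matrix.mul_add, Matrix.mul_smul, Matrix.mul_one, ← hE1, Matrix.add_mul,
      Matrix.smul_mul, Matrix.one_mul]
    congr 1
    rw [← Matrix.mul_assoc, ← Matrix.mul_assoc, Matrix.mul_nonsing_inv _ hB1u, Matrix.one_mul]
  have hBD2 : B2 * D2 = E2 * B2 := by
    rw [hD2, Matrix.mul_add, Matrix.mul_smul, Matrix.mul_one, ← hE2, Matrix.add_mul,
      Matrix.smul_mul, Matrix.one_mul]
    congr 1
    rw [← Matrix.mul_assoc, ← Matrix.mul_assoc, Matrix.mul_nonsing_inv _ hB2u, Matrix.one_mul]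
  -- D1 is invertible
  have hD1u : IsUnit D1.det := by
    have h : B1.det * D1.det = E1.det * B1.det := by
      rw [← Matrix.det_mul, ← Matrix.det_mul, hBD1]
    have hne : B1.det ≠ 0 := by
      rwa [isUnit_iff_ne_zero] at hB1u
    have hD1det : D1.det = E1.det := by
      rw [mul_comm E1.det] at h
      exact mul_left_cancel₀ hne h
    rw [hD1det]; exact hE1u
  -- B1 * D1⁻¹ = E1⁻¹ * B1
  have hB1D1inv : B1 * D1⁻¹ = E1⁻¹ * B1 := by
    have h1 : B1 = E1 * B1 * D1⁻¹ := by
      rw [← hBD1, Matrix.mul_assoc, Matrix.mul_nonsing_inv _ hD1u, Matrix.mul_one]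
    conv_rhs => rw [h1]
    rw [← Matrix.mul_assoc, ← Matrix.mul_assoc, Matrix.nonsing_inv_mul _ hE1u, Matrix.one_mul]
  -- key structural identity: B1 - E1 = S * (B2 - E2)
  set S : Matrix (Fin c) (Fin c) ℝ := Matrix.of fun i j =>
    if (j : ℕ) = (i : ℕ) + 1 then
      -(((c - (i : ℕ) - 1 : ℕ) : ℝ) * mu2) / ((((i : ℕ) : ℝ) + 1) * mu1) else 0 with hSd
  have hS : B1 - E1 = S * (B2 - E2) := by
    rw [hE1d, hE2d]
    ext i j
    simp only [Matrix.mul_apply, Matrix.sub_apply]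
    by_cases hlast : (i:ℕ) + 1 < c
    · set i' : Fin c := ⟨(i:ℕ)+1, hlast⟩ with hi'
      have hi'v : (i' : ℕ) = (i:ℕ) + 1 := rfl
      have hii' : i ≠ i' := by
        intro h
        have := congrArg Fin.val h
        rw [hi'v] at this; omega
      rw [Finset.sum_eq_single i']
      rotate_left
      · intro kk _ hk
        have hk' : ¬((kk:ℕ) = (i:ℕ)+1) := fun h => hk (Fin.ext h)
        simp only [hSd, Matrix.of_apply, if_neg hk', zero_mul]
      · intro h; exact absurd (Finset.mem_univ _) h
      have hSval : S i i' = -(((c - (i:ℕ) - 1 : ℕ):ℝ) * mu2) / ((((i:ℕ):ℝ)+1) * mu1) := by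
        rw [hSd]
        simp only [Matrix.of_apply, hi'v]
        rw [if_true]
      rw [hSval]
      have hk1 : 1 ≤ c - (i:ℕ) - 1 := by omega
      have hne : (((i:ℕ):ℝ)+1) * mu1 ≠ 0 := mul_ne_zero (by positivity) (ne_of_gt hmu1)
      by_cases hji : (j:ℕ) = (i:ℕ)
      · have hij : i = j := Fin.ext hji.symm
        have hB1v : B1 i j = (((i:ℕ):ℝ)+1) * mu1 := by
          rw [hB1]; simp only [Matrix.of_apply, if_pos hji]
        have hE1v : Matrix.diagonal e1 i j = e1 i := by
          rw [Matrix.diagonal_apply, if_pos hij]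
        have h1 : ¬((j:ℕ) = (i':ℕ)) := by rw [hi'v]; omega
        have h2 : (j:ℕ) + 1 = (i':ℕ) := by rw [hi'v]; omega
        have hB2v : B2 i' j = (((i:ℕ):ℝ)+1) * mu1 := by
          rw [hB2]; simp only [Matrix.of_apply]; rw [if_neg h1, if_pos h2, hi'v]
          push_cast; ring
        have hE2v : Matrix.diagonal e2 i' j = 0 :=
          Matrix.diagonal_apply_ne e2 (Ne.symm (fun h => h1 (congrArg Fin.val h)))
        rw [hB1v, hE1v, hB2v, hE2v, sub_zero, div_mul_cancel₀ _ hne, he1]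
        dsimp only
        rw [show (c - 1 - (i:ℕ) : ℕ) = c - (i:ℕ) - 1 from by omega]
        ring
      · by_cases hji' : (j:ℕ) = (i:ℕ) + 1
        · have hij' : i' = j := Fin.ext (by rw [hi'v, hji'])
          have hB1v : B1 i j = ((c - (i:ℕ) - 1 : ℕ):ℝ) * mu2 := by
            rw [hB1]; simp only [Matrix.of_apply, if_neg hji, if_pos hji']
          have hE1v : Matrix.diagonal e1 i j = 0 :=
            Matrix.diagonal_apply_ne e1 (fun h => hji (congrArg Fin.val h).symm)
          have h1 : (j:ℕ) = (i':ℕ) := by rw [hi'v, hji']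
          have hB2v : B2 i' j = ((c - ((i:ℕ)+1) : ℕ):ℝ) * mu2 := by
            rw [hB2]; simp only [Matrix.of_apply]; rw [if_pos h1, hi'v]
          have hE2v : Matrix.diagonal e2 i' j = e2 i' := by
            rw [Matrix.diagonal_apply, if_pos hij']
          rw [hB1v, hE1v, hB2v, hE2v, he2]
          dsimp only

          rw [show (c - ((i:ℕ)+1) : ℕ) = c - (i:ℕ) - 1 from by omega,
            show (c - 1 - ((i:ℕ)+1) : ℕ) = c - (i:ℕ) - 1 - 1 from by omega]
          rw [Nat.cast_sub hk1]
          rw [hi'v]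
          push_cast
          field_simp
          ring
        · have hB1v : B1 i j = 0 := by
            rw [hB1]; simp only [Matrix.of_apply, if_neg hji, if_neg hji']
          have hE1v : Matrix.diagonal e1 i j = 0 :=
            Matrix.diagonal_apply_ne e1 (fun h => hji (congrArg Fin.val h).symm)
          have h1 : ¬((j:ℕ) = (i':ℕ)) := by rw [hi'v]; exact hji'
          have h2 : ¬((j:ℕ) + 1 = (i':ℕ)) := by rw [hi'v]; omega
          have hB2v : B2 i' j = 0 := by
            rw [hB2]; simp only [Matrix.of_apply, if_neg h1, if_neg h2]
          have hE2v : Matrix.diagonal e2 i' j = 0 :=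
            Matrix.diagonal_apply_ne e2 (fun h => h1 (congrArg Fin.val h).symm)
          rw [hB1v, hE1v, hB2v, hE2v]
          simp
    · rw [Finset.sum_eq_zero]
      rotate_left
      · intro kk _
        have hk' : ¬((kk:ℕ) = (i:ℕ)+1) := by have := kk.isLt; omega
        simp only [hSd, Matrix.of_apply, if_neg hk', zero_mul]
      by_cases hji : (j:ℕ) = (i:ℕ)
      · have hij : i = j := Fin.ext hji.symm
        have hB1v : B1 i j = (((i:ℕ):ℝ)+1) * mu1 := by
          rw [hB1]; simp only [Matrix.of_apply, if_pos hji]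
        have hE1v : Matrix.diagonal e1 i j = e1 i := by
          rw [Matrix.diagonal_apply, if_pos hij]
        rw [hB1v, hE1v, he1]
        dsimp only
        rw [show (c - 1 - (i:ℕ) : ℕ) = 0 from by have := i.isLt; omega]
        push_cast; ring
      · have hji' : ¬((j:ℕ) = (i:ℕ) + 1) := by have := j.isLt; omega
        have hB1v : B1 i j = 0 := by
          rw [hB1]; simp only [Matrix.of_apply, if_neg hji, if_neg hji']
        have hE1v : Matrix.diagonal e1 i j = 0 :=
          Matrix.diagonal_apply_ne e1 (fun h => hji (congrArg Fin.val h).symm)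
        rw [hB1v, hE1v]
        simp
  -- assemble
  set w : Fin c → ℝ := B2 *ᵥ ψ with hwd
  have hw : D2 *ᵥ ψ = w := by
    have := hψ
    rw [Matrix.sub_mulVec, sub_eq_zero] at this
    exact this.symm
  have hw2 : (B2 - E2) *ᵥ w = 0 := by
    rw [Matrix.sub_mulVec, sub_eq_zero]
    calc B2 *ᵥ w = B2 *ᵥ (D2 *ᵥ ψ) := by rw [hw]
      _ = (B2 * D2) *ᵥ ψ := by rw [Matrix.mulVec_mulVec]
      _ = (E2 * B2) *ᵥ ψ := by rw [hBD2]
      _ = E2 *ᵥ w := by rw [← Matrix.mulVec_mulVec]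
  have hw1 : (B1 - E1) *ᵥ w = 0 := by
    rw [hS, ← Matrix.mulVec_mulVec, hw2, Matrix.mulVec_zero]
  have hB1w : B1 *ᵥ w = E1 *ᵥ w := by
    rwa [Matrix.sub_mulVec, sub_eq_zero] at hw1
  have key : (B1 * D1⁻¹) *ᵥ (D2 *ᵥ ψ) = w := by
    rw [hw, hB1D1inv, ← Matrix.mulVec_mulVec, hB1w, Matrix.mulVec_mulVec,
      Matrix.nonsing_inv_mul _ hE1u, Matrix.one_mulVec]
  constructor
  · rw [Matrix.sub_mulVec]
    have h1 : (B1 * D1⁻¹ * D2) *ᵥ ψ = (B1 * D1⁻¹) *ᵥ (D2 *ᵥ ψ) := by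
      rw [Matrix.mulVec_mulVec]
    rw [h1, key, ← hwd, sub_self]
  · rw [Matrix.sub_mulVec]
    have h1 : (D1⁻¹ * D2) *ᵥ ψ = D1⁻¹ *ᵥ (D2 *ᵥ ψ) := (Matrix.mulVec_mulVec _ _ _).symm
    have h2 : B1 *ᵥ (D1⁻¹ *ᵥ (D2 *ᵥ ψ)) = (B1 * D1⁻¹) *ᵥ (D2 *ᵥ ψ) := by
      rw [Matrix.mulVec_mulVec]
    have h3 : D1 *ᵥ (D1⁻¹ *ᵥ (D2 *ᵥ ψ)) = D2 *ᵥ ψ := by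
      rw [Matrix.mulVec_mulVec, Matrix.mul_nonsing_inv _ hD1u, Matrix.one_mulVec]
    rw [h1, h2, h3, key, hw, sub_self]
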